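/- Let r ≥ 4. If e_0, H_1, e_1, H_2, …, e_{t−1}, H_t, e_t is a good K_r-chain, then the graph G_0 = (∪_{i=1}^t H_i) − {e_1, e_2, …, e_t} evolves in the K_r-bootstrap percolation process as follows: for every 0 ≤ i ≤ t, G_i = G_0 ∪ {e_1, …, e_i}; in particular, exactly one new edge is infected at each of the first t steps, and the process stabilizes at time t. -/

import Mathlib

/-- One step of the `K_r`-bootstrap percolation process: we add every edge `uv` for which
there is an `r`-element vertex set `S` containing `u` and `v` such that every edge within `S`
other than `uv` is already present. -/
def bootStep {V : Type*} (r : ℕ) (G : SimpleGraph V) : SimpleGraph V where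
  Adj u v := G.Adj u v ∨ (u ≠ v ∧ ∃ S : Finset V, S.card = r ∧ u ∈ S ∧ v ∈ S ∧
    ∀ x ∈ S, ∀ y ∈ S, x ≠ y → ¬((x = u ∧ y = v) ∨ (x = v ∧ y = u)) → G.Adj x y)
  symm := by
    constructor
    intro a b h
    rcases h with h | ⟨hne, S, hS, ha, hb, hall⟩
    · exact Or.inl h.symm
    · refine Or.inr ⟨hne.symm, S, hS, hb, ha, ?_⟩
      intro x hx y hy hxy hno
      exact hall x hx y hy hxy (by tauto)
  loopless := by
    constructor
    intro a h
    rcases h with h | ⟨hne, _⟩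
    · exact G.irrefl h
    · exact hne rfl

/-- `H 1, …, H t` is a `K_r`-chain: each `H i` is a set of `r` vertices (spanning a complete
graph), and for `i < j` the cliques `H i` and `H j` are edge-disjoint (share at most one
vertex) unless `j = i + 1`, in which case they share exactly one edge (exactly two
vertices). -/
def IsKrChain {n : ℕ} (r t : ℕ) (H : ℕ → Finset (Fin n)) : Prop :=
  (∀ i, 1 ≤ i → i ≤ t → (H i).card = r) ∧
  (∀ i j, 1 ≤ i → i < j → j ≤ t →
    (j = i + 1 → (H i ∩ H j).card = 2) ∧ (j ≠ i + 1 → (H i ∩ H j).card ≤ 1))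

/-- The chain `H 1, …, H t` has an external `K_r^-`: there is an `r`-set `B`, not equal to
any `H i`, and a pair `x ≠ y` in `B`, such that every edge within `B` other than (possibly)
`xy` lies inside some `H i`. -/
def HasExternalKrMinus {n : ℕ} (r t : ℕ) (H : ℕ → Finset (Fin n)) : Prop :=
  ∃ B : Finset (Fin n), B.card = r ∧ (∀ i, 1 ≤ i → i ≤ t → B ≠ H i) ∧
    ∃ x ∈ B, ∃ y ∈ B, x ≠ y ∧
      ∀ u ∈ B, ∀ v ∈ B, u ≠ v → ¬((u = x ∧ v = y) ∨ (u = y ∧ v = x)) →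
        ∃ i, 1 ≤ i ∧ i ≤ t ∧ u ∈ H i ∧ v ∈ H i

/-- The graph `(⋃_{i=1}^t K_{H i}) - {e 1, …, e t}`: the union of the complete graphs on the
sets `H 1, …, H t` with the edges `e 1, …, e t` removed. -/
def chainGraph {n : ℕ} (t : ℕ) (H : ℕ → Finset (Fin n)) (e : ℕ → Finset (Fin n)) :
    SimpleGraph (Fin n) where
  Adj u v := u ≠ v ∧ (∃ i, 1 ≤ i ∧ i ≤ t ∧ u ∈ H i ∧ v ∈ H i) ∧
    ∀ k, 1 ≤ k → k ≤ t → ({u, v} : Finset (Fin n)) ≠ e k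
  symm := by
    constructor
    rintro a b ⟨hne, ⟨i, h1, h2, ha, hb⟩, he⟩
    refine ⟨hne.symm, ⟨i, h1, h2, hb, ha⟩, ?_⟩
    intro k hk1 hk2
    rw [Finset.pair_comm]
    exact he k hk1 hk2
  loopless := ⟨fun a h => h.1 rfl⟩

/-- The graph `chainGraph t H e` together with the edges `e 1, …, e m`. -/
def chainGraphUpTo {n : ℕ} (t m : ℕ) (H : ℕ → Finset (Fin n)) (e : ℕ → Finset (Fin n)) :
    SimpleGraph (Fin n) where
  Adj u v := (chainGraph t H e).Adj u v ∨
    (u ≠ v ∧ ∃ k, 1 ≤ k ∧ k ≤ m ∧ ({u, v} : Finset (Fin n)) = e k)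
  symm := by
    constructor
    rintro a b (h | ⟨hne, k, h1, h2, hk⟩)
    · exact Or.inl ((chainGraph t H e).adj_symm h)
    · exact Or.inr ⟨hne.symm, k, h1, h2, by rwa [Finset.pair_comm]⟩
  loopless := by
    constructor
    rintro a (h | ⟨hne, _⟩)
    · exact (chainGraph t H e).irrefl h
    · exact hne rfl

section AuxChain

variable {n : ℕ} {r t : ℕ} {H e : ℕ → Finset (Fin n)}

lemma bootStep_adj {V : Type*} (r : ℕ) (G : SimpleGraph V) (u v : V) :
    (bootStep r G).Adj u v ↔ (G.Adj u v ∨ (u ≠ v ∧ ∃ S : Finset V, S.card = r ∧ u ∈ S ∧ v ∈ S ∧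
      ∀ x ∈ S, ∀ y ∈ S, x ≠ y → ¬((x = u ∧ y = v) ∨ (x = v ∧ y = u)) → G.Adj x y)) :=
  Iff.rfl

lemma chainGraph_adj (t : ℕ) (H e : ℕ → Finset (Fin n)) (u v : Fin n) :
    (chainGraph t H e).Adj u v ↔ (u ≠ v ∧ (∃ i, 1 ≤ i ∧ i ≤ t ∧ u ∈ H i ∧ v ∈ H i) ∧
      ∀ k, 1 ≤ k → k ≤ t → ({u, v} : Finset (Fin n)) ≠ e k) :=
  Iff.rfl

lemma chainGraphUpTo_adj (t m : ℕ) (H e : ℕ → Finset (Fin n)) (u v : Fin n) :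
    (chainGraphUpTo t m H e).Adj u v ↔ ((chainGraph t H e).Adj u v ∨
      (u ≠ v ∧ ∃ k, 1 ≤ k ∧ k ≤ m ∧ ({u, v} : Finset (Fin n)) = e k)) :=
  Iff.rfl

lemma pair_cases {x y u v : Fin n} (h : ({x, y} : Finset (Fin n)) = {u, v}) :
    (x = u ∧ y = v) ∨ (x = v ∧ y = u) := by
  have h' : ({x, y} : Set (Fin n)) = {u, v} := by
    have := Finset.coe_inj.mpr h
    simpa using this
  have := Set.pair_eq_pair_iff.mp h'
  tauto

lemma cardE (hchain : IsKrChain r t H)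
    (hmid : ∀ i, 1 ≤ i → i + 1 ≤ t → e i = H i ∩ H (i + 1))
    (het : (e t).card = 2 ∧ e t ⊆ H t ∧ e t ≠ e (t - 1)) :
    ∀ k, 1 ≤ k → k ≤ t → (e k).card = 2 := by
  intro k hk1 hk2
  rcases eq_or_lt_of_le hk2 with rfl | hlt
  · exact het.1
  · rw [hmid k hk1 hlt]
    exact (hchain.2 k (k + 1) hk1 (Nat.lt_succ_self k) hlt).1 rfl

lemma subE (hmid : ∀ i, 1 ≤ i → i + 1 ≤ t → e i = H i ∩ H (i + 1))
    (het : (e t).card = 2 ∧ e t ⊆ H t ∧ e t ≠ e (t - 1)) :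
    ∀ k, 1 ≤ k → k ≤ t → e k ⊆ H k := by
  intro k hk1 hk2
  rcases eq_or_lt_of_le hk2 with rfl | hlt
  · exact het.2.1
  · rw [hmid k hk1 hlt]; exact Finset.inter_subset_left

lemma subE' (hmid : ∀ i, 1 ≤ i → i + 1 ≤ t → e i = H i ∩ H (i + 1)) :
    ∀ k, 1 ≤ k → k + 1 ≤ t → e k ⊆ H (k + 1) := by
  intro k hk1 hk2
  rw [hmid k hk1 hk2]; exact Finset.inter_subset_right

lemma keyB (hchain : IsKrChain r t H)
    (hmid : ∀ i, 1 ≤ i → i + 1 ≤ t → e i = H i ∩ H (i + 1))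
    (het : (e t).card = 2 ∧ e t ⊆ H t ∧ e t ≠ e (t - 1)) :
    ∀ k j, 1 ≤ k → k ≤ t → 1 ≤ j → j ≤ t → e k ⊆ H j → k = j ∨ k + 1 = j := by
  intro k j hk1 hk2 hj1 hj2 hsub
  by_contra hcon
  push_neg at hcon
  obtain ⟨hkj, hkj1⟩ := hcon
  have hcard : (e k).card = 2 := cardE hchain hmid het k hk1 hk2
  rcases eq_or_lt_of_le hk2 with rfl | hlt
  · -- k = t
    have hjt : j < k := lt_of_le_of_ne hj2 (fun h => hkj h.symm)
    have hsub2 : e k ⊆ H j ∩ H k := Finset.subset_inter hsub het.2.1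
    have hc := hchain.2 j k hj1 hjt le_rfl
    by_cases hcase : k = j + 1
    · have h2 : (H j ∩ H k).card = 2 := hc.1 hcase
      have heq2 : e k = H j ∩ H k :=
        Finset.eq_of_subset_of_card_le hsub2 (by omega)
      have hm : e (k - 1) = H (k - 1) ∩ H k := by
        have h := hmid (k - 1) (by omega) (by omega)
        rwa [Nat.sub_add_cancel (by omega)] at h
      have hfin : e k = e (k - 1) := by
        have hj' : k - 1 = j := by omega
        rw [heq2, hm, hj']
      exact het.2.2 hfin
    · have h1 : (H j ∩ H k).card ≤ 1 := hc.2 hcase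
      have := Finset.card_le_card hsub2
      omega
  · -- k < t
    rcases lt_trichotomy k j with hlt2 | heq2 | hgt
    · have hc := (hchain.2 k j hk1 hlt2 hj2).2 (fun h => hkj1 h.symm)
      have hsubk : e k ⊆ H k := subE hmid het k hk1 (le_of_lt hlt)
      have := Finset.card_le_card (Finset.subset_inter hsubk hsub)
      omega
    · exact hkj heq2
    · have hsubk1 : e k ⊆ H (k + 1) := subE' hmid k hk1 hlt
      have hc := (hchain.2 j (k + 1) hj1 (by omega) hlt).2 (by omega)
      have := Finset.card_le_card (Finset.subset_inter hsub hsubk1)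
      omega

lemma distinctE (hchain : IsKrChain r t H)
    (hmid : ∀ i, 1 ≤ i → i + 1 ≤ t → e i = H i ∩ H (i + 1))
    (het : (e t).card = 2 ∧ e t ⊆ H t ∧ e t ≠ e (t - 1)) :
    ∀ k l, 1 ≤ k → k < l → l ≤ t → e k ≠ e l := by
  intro k l hk1 hkl hl2 heq
  have hsubl : e l ⊆ H l := subE hmid het l (by omega) hl2
  have h1 := keyB hchain hmid het k l hk1 (by omega) (by omega) hl2 (heq ▸ hsubl)
  have hkl1 : k + 1 = l := by omega
  rcases eq_or_lt_of_le hl2 with rfl | hlt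
  · apply het.2.2
    have hk' : k = l - 1 := by omega
    rw [← heq, hk']
  · have hsubl1 : e l ⊆ H (l + 1) := subE' hmid l (by omega) hlt
    have h2 := keyB hchain hmid het k (l + 1) hk1 (by omega) (by omega) hlt (heq ▸ hsubl1)
    omega

lemma adj_in_clique {m : ℕ}
    (hmid : ∀ i, 1 ≤ i → i + 1 ≤ t → e i = H i ∩ H (i + 1))
    (het : (e t).card = 2 ∧ e t ⊆ H t ∧ e t ≠ e (t - 1))
    (hm : m ≤ t) {u v : Fin n} (h : (chainGraphUpTo t m H e).Adj u v) :
    u ≠ v ∧ ∃ j, 1 ≤ j ∧ j ≤ t ∧ u ∈ H j ∧ v ∈ H j := by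
  rcases h with ⟨hne, hcl, _⟩ | ⟨hne, k, hk1, hk2, hk⟩
  · exact ⟨hne, hcl⟩
  · have hsub := subE hmid het k hk1 (hk2.trans hm)
    refine ⟨hne, k, hk1, hk2.trans hm, ?_, ?_⟩
    · exact hsub (by rw [← hk]; simp)
    · exact hsub (by rw [← hk]; simp)

end AuxChain

section MainChain

variable {n : ℕ} {r t : ℕ} {H e : ℕ → Finset (Fin n)}

lemma clique_of_percolating (hgood : ¬ HasExternalKrMinus r t H)
    (hmid : ∀ i, 1 ≤ i → i + 1 ≤ t → e i = H i ∩ H (i + 1))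
    (het : (e t).card = 2 ∧ e t ⊆ H t ∧ e t ≠ e (t - 1))
    {m : ℕ} (hm : m ≤ t) {u v : Fin n} (hne : u ≠ v) {S : Finset (Fin n)}
    (hScard : S.card = r) (huS : u ∈ S) (hvS : v ∈ S)
    (hall : ∀ x ∈ S, ∀ y ∈ S, x ≠ y → ¬((x = u ∧ y = v) ∨ (x = v ∧ y = u)) →
      (chainGraphUpTo t m H e).Adj x y) :
    ∃ j, 1 ≤ j ∧ j ≤ t ∧ S = H j := by
  by_contra hcon
  push_neg at hcon
  apply hgood
  refine ⟨S, hScard, fun j hj1 hj2 => hcon j hj1 hj2, u, huS, v, hvS, hne, ?_⟩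
  intro x hx y hy hxy hno
  exact (adj_in_clique hmid het hm (hall x hx y hy hxy hno)).2

lemma step_lemma (hchain : IsKrChain r t H) (hgood : ¬ HasExternalKrMinus r t H)
    (hmid : ∀ i, 1 ≤ i → i + 1 ≤ t → e i = H i ∩ H (i + 1))
    (het : (e t).card = 2 ∧ e t ⊆ H t ∧ e t ≠ e (t - 1)) :
    ∀ i, i < t → bootStep r (chainGraphUpTo t i H e) = chainGraphUpTo t (i + 1) H e := by
  intro i hit
  ext u v
  rw [bootStep_adj, chainGraphUpTo_adj t i, chainGraphUpTo_adj t (i + 1)]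
  constructor
  · rintro ((h | ⟨hne, k, hk1, hk2, hk⟩) | ⟨hne, S, hScard, huS, hvS, hall⟩)
    · exact Or.inl h
    · exact Or.inr ⟨hne, k, hk1, by omega, hk⟩
    · obtain ⟨j, hj1, hj2, rfl⟩ :=
        clique_of_percolating hgood hmid het (le_of_lt hit) hne hScard huS hvS hall
      by_cases hk : ∃ k, 1 ≤ k ∧ k ≤ t ∧ ({u, v} : Finset (Fin n)) = e k
      · obtain ⟨k, hk1, hk2, hkuv⟩ := hk
        have hsubuv : e k ⊆ H j := by
          rw [← hkuv]
          simp only [Finset.insert_subset_iff, Finset.singleton_subset_iff]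
          exact ⟨huS, hvS⟩
        have hB := keyB hchain hmid het k j hk1 hk2 hj1 hj2 hsubuv
        by_cases hki : k ≤ i + 1
        · exact Or.inr ⟨hne, k, hk1, hki, hkuv⟩
        · exfalso
          push_neg at hki
          obtain ⟨k', hk'1, hk'2, hk'i, hk'k, hsub'⟩ :
              ∃ k', 1 ≤ k' ∧ k' ≤ t ∧ i < k' ∧ k' ≠ k ∧ e k' ⊆ H j := by
            rcases hB with rfl | rfl
            · refine ⟨k - 1, by omega, by omega, by omega, by omega, ?_⟩
              have h1 := hmid (k - 1) (by omega) (by omega)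
              rw [h1, Nat.sub_add_cancel (by omega : 1 ≤ k)]
              exact Finset.inter_subset_right
            · exact ⟨k + 1, by omega, by omega, by omega, by omega,
                subE hmid het (k + 1) (by omega) (by omega)⟩
          obtain ⟨a, b, hab, heab⟩ :=
            Finset.card_eq_two.mp (cardE hchain hmid het k' hk'1 hk'2)
          have haH : a ∈ H j := hsub' (by rw [heab]; simp)
          have hbH : b ∈ H j := hsub' (by rw [heab]; simp)
          have hne' : e k' ≠ e k := by
            rcases lt_or_gt_of_ne hk'k with h | h
            · exact distinctE hchain hmid het k' k hk'1 h hk2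
            · exact (distinctE hchain hmid het k k' hk1 h hk'2).symm
          have hnuv : ¬((a = u ∧ b = v) ∨ (a = v ∧ b = u)) := by
            rintro (⟨rfl, rfl⟩ | ⟨rfl, rfl⟩)
            · exact hne' (heab.trans hkuv)
            · exact hne' (heab.trans ((Finset.pair_comm a b).trans hkuv))
          have hadj := hall a haH b hbH hab hnuv
          rcases hadj with ⟨_, _, hforall⟩ | ⟨_, m, hm1, hm2, hm⟩
          · exact hforall k' hk'1 hk'2 heab.symm
          · have hemk : e m = e k' := hm.symm.trans heab.symm
            exact distinctE hchain hmid het m k' hm1 (by omega) hk'2 hemk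
      · push_neg at hk
        exact Or.inl ⟨hne, ⟨j, hj1, hj2, huS, hvS⟩, hk⟩
  · rintro (h | ⟨hne, k, hk1, hk2, hk⟩)
    · exact Or.inl (Or.inl h)
    · by_cases hki : k ≤ i
      · exact Or.inl (Or.inr ⟨hne, k, hk1, hki, hk⟩)
      · have hk' : k = i + 1 := by omega
        subst hk'
        have hsubE : e (i + 1) ⊆ H (i + 1) := subE hmid het (i + 1) (by omega) hit
        refine Or.inr ⟨hne, H (i + 1), hchain.1 (i + 1) (by omega) hit,
          hsubE (by rw [← hk]; simp), hsubE (by rw [← hk]; simp), ?_⟩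
        intro x hx y hy hxy hno
        by_cases hm : ∃ m, 1 ≤ m ∧ m ≤ t ∧ ({x, y} : Finset (Fin n)) = e m
        · obtain ⟨m, hm1, hm2, hmxy⟩ := hm
          have hsubm : e m ⊆ H (i + 1) := by
            rw [← hmxy]
            simp only [Finset.insert_subset_iff, Finset.singleton_subset_iff]
            exact ⟨hx, hy⟩
          have hB := keyB hchain hmid het m (i + 1) hm1 hm2 (by omega) hit hsubm
          rcases hB with hBe | hBe
          · exfalso
            apply hno
            apply pair_cases
            rw [hmxy, hBe, ← hk]
          · have hmi : m = i := by omega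
            exact Or.inr ⟨hxy, m, hm1, by omega, hmxy⟩
        · push_neg at hm
          exact Or.inl ⟨hxy, ⟨i + 1, by omega, hit, hx, hy⟩, hm⟩

lemma stable_lemma (hgood : ¬ HasExternalKrMinus r t H)
    (hmid : ∀ i, 1 ≤ i → i + 1 ≤ t → e i = H i ∩ H (i + 1))
    (het : (e t).card = 2 ∧ e t ⊆ H t ∧ e t ≠ e (t - 1)) :
    bootStep r (chainGraphUpTo t t H e) = chainGraphUpTo t t H e := by
  ext u v
  rw [bootStep_adj]
  constructor
  · rintro (h | ⟨hne, S, hScard, huS, hvS, hall⟩)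
    · exact h
    · obtain ⟨j, hj1, hj2, rfl⟩ :=
        clique_of_percolating hgood hmid het le_rfl hne hScard huS hvS hall
      by_cases hk : ∃ k, 1 ≤ k ∧ k ≤ t ∧ ({u, v} : Finset (Fin n)) = e k
      · obtain ⟨k, hk1, hk2, hkuv⟩ := hk
        exact Or.inr ⟨hne, k, hk1, hk2, hkuv⟩
      · push_neg at hk
        exact Or.inl ⟨hne, ⟨j, hj1, hj2, huS, hvS⟩, hk⟩
  · exact fun h => Or.inl h

lemma base_lemma : chainGraph t H e = chainGraphUpTo t 0 H e := by
  ext u v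
  constructor
  · exact fun h => Or.inl h
  · rintro (h | ⟨_, k, hk1, hk2, _⟩)
    · exact h
    · omega

lemma upTo_ne (hchain : IsKrChain r t H)
    (hmid : ∀ i, 1 ≤ i → i + 1 ≤ t → e i = H i ∩ H (i + 1))
    (het : (e t).card = 2 ∧ e t ⊆ H t ∧ e t ≠ e (t - 1))
    {s : ℕ} (hs : s < t) : chainGraphUpTo t (s + 1) H e ≠ chainGraphUpTo t s H e := by
  intro heq
  obtain ⟨a, b, hab, hEab⟩ :=
    Finset.card_eq_two.mp (cardE hchain hmid het (s + 1) (by omega) hs)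
  have hadj : (chainGraphUpTo t (s + 1) H e).Adj a b :=
    Or.inr ⟨hab, s + 1, by omega, le_rfl, hEab.symm⟩
  rw [heq] at hadj
  rcases hadj with ⟨_, _, hforall⟩ | ⟨_, m, hm1, hm2, hm⟩
  · exact hforall (s + 1) (by omega) hs hEab.symm
  · exact distinctE hchain hmid het m (s + 1) hm1 (by omega) hs (hm.symm.trans hEab.symm)

end MainChain

/-- Given a good `K_r`-chain `e 0, H 1, e 1, H 2, …, e (t-1), H t, e t` (where
`e i = H i ∩ H (i+1)` for `1 ≤ i ≤ t-1`, `e 0` is an edge of `H 1` other than `e 1` and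
`e t` is an edge of `H t` other than `e (t-1)`), the `K_r`-bootstrap process starting from
`G₀ = (⋃ H i) - {e 1, …, e t}` satisfies `G_i = G₀ ∪ {e 1, …, e i}` for all `i ≤ t`;
in particular exactly one new edge is infected at each of the first `t` steps, and the
process stabilizes at time exactly `t`. -/
theorem good_chain_process {n : ℕ} (r t : ℕ) (hr : 4 ≤ r) (ht : 1 ≤ t)
    (H e : ℕ → Finset (Fin n))
    (hchain : IsKrChain r t H)
    (hgood : ¬ HasExternalKrMinus r t H)
    (hmid : ∀ i, 1 ≤ i → i + 1 ≤ t → e i = H i ∩ H (i + 1))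
    (he0 : (e 0).card = 2 ∧ e 0 ⊆ H 1 ∧ e 0 ≠ e 1)
    (het : (e t).card = 2 ∧ e t ⊆ H t ∧ e t ≠ e (t - 1)) :
    (∀ i ≤ t, (bootStep r)^[i] (chainGraph t H e) = chainGraphUpTo t i H e) ∧
    (bootStep r)^[t + 1] (chainGraph t H e) = (bootStep r)^[t] (chainGraph t H e) ∧
    (∀ s, (bootStep r)^[s + 1] (chainGraph t H e) = (bootStep r)^[s] (chainGraph t H e) →
      t ≤ s) := by
  have hpart1 : ∀ i ≤ t, (bootStep r)^[i] (chainGraph t H e) = chainGraphUpTo t i H e := by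
    intro i hi
    induction i with
    | zero => simpa using (base_lemma : chainGraph t H e = chainGraphUpTo t 0 H e)
    | succ m ih =>
      rw [Function.iterate_succ_apply', ih (by omega)]
      exact step_lemma hchain hgood hmid het m (by omega)
  refine ⟨hpart1, ?_, ?_⟩
  · rw [Function.iterate_succ_apply', hpart1 t le_rfl]
    exact stable_lemma hgood hmid het
  · intro s hstab
    by_contra hcon
    push_neg at hcon
    rw [hpart1 (s + 1) (by omega), hpart1 s (by omega)] at hstab
    exact upTo_ne hchain hmid het hcon hstab
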